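/- Let Q be a basket of type 1/r(a, -a, 1) with index r satisfying 28 ≤ r ≤ 36. Then l(Q, 18) > 37. -/
import Mathlib


/-- The Reid correction term `l(r, b, m) = ∑_{j=1}^{m-1} \overline{bj}(r-\overline{bj})/(2r)`,
where `\overline{bj}` is the smallest non-negative residue of `b*j` mod `r`.
(The `j = 0` term vanishes, so we may sum over `j ∈ range m`.) -/
def reidL (r b m : ℕ) : ℚ :=
  ∑ j ∈ Finset.range m,
    (((b * j) % r : ℕ) : ℚ) * ((r : ℚ) - (((b * j) % r : ℕ) : ℚ)) / (2 * r)

/-- A basket of type `1/r(a, -a, 1)`: a pair of integers `(r, a)` with `r ≥ 2`,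
`0 < a < r` and `gcd(a, r) = 1`. -/
structure Basket where
  r : ℕ
  a : ℕ
  two_le_r : 2 ≤ r
  a_pos : 0 < a
  a_lt_r : a < r
  coprime : Nat.Coprime a r

/-- The unique `b` with `0 < b < r` and `a * b ≡ 1 (mod r)`. -/
def Basket.binv (Q : Basket) : ℕ := ((Q.a : ZMod Q.r)⁻¹).val

/-- The correction term `l(Q, m)` of a basket. -/
def Basket.l (Q : Basket) (m : ℕ) : ℚ := reidL Q.r Q.binv m

/-- `Δ_n(Q) := n² l(Q,2) + l(Q,n) - l(Q,n+1)`. -/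
def Basket.delta (Q : Basket) (n : ℕ) : ℚ :=
  (n : ℚ) ^ 2 * Q.l 2 + Q.l n - Q.l (n + 1)

/-- A formal basket datum with `χ = 1`: a finite multiset of baskets together
with a positive rational number `K`. -/
structure FormalDatum where
  B : Multiset Basket
  K : ℚ
  K_pos : 0 < K

/-- The formal plurigenus `P(m) = (1/12)m(m-1)(2m-1)K - (2m-1) + ∑_{Q ∈ B} l(Q, m)`. -/
def FormalDatum.P (D : FormalDatum) (m : ℕ) : ℚ :=
  (1 / 12 : ℚ) * m * (m - 1) * (2 * m - 1) * D.K - (2 * m - 1)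
    + (D.B.map (fun Q => Q.l m)).sum

/-- The numerator sum `∑_{j<18} \overline{bj}(r - \overline{bj})` as a natural number. -/
def natS (r b : ℕ) : ℕ := ∑ j ∈ Finset.range 18, (b * j % r) * (r - b * j % r)

lemma reidL_eq_natS (r b : ℕ) (hr : 0 < r) :
    reidL r b 18 = (natS r b : ℚ) / (2 * r) := by
  unfold reidL natS
  rw [Nat.cast_sum, Finset.sum_div]
  refine Finset.sum_congr rfl fun j _ => ?_
  have h : b * j % r ≤ r := (Nat.mod_lt _ hr).le
  push_cast [Nat.cast_sub h]
  ring

set_option maxHeartbeats 2000000 in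
lemma natS_key : ∀ r ∈ Finset.Icc 28 36, ∀ b ∈ Finset.range r,
    Nat.Coprime b r → 74 * r < natS r b := by decide

/-- For a basket `Q` of index `28 ≤ r ≤ 36`, `l(Q, 18) > 37`. -/
theorem basket_l_eighteen_gt_of_index_between (Q : Basket) (h1 : 28 ≤ Q.r)
    (h2 : Q.r ≤ 36) : 37 < Q.l 18 := by
  have hr : 0 < Q.r := by omega
  haveI : NeZero Q.r := ⟨hr.ne'⟩
  have hblt : Q.binv < Q.r := ZMod.val_lt _
  have hbcop : Nat.Coprime Q.binv Q.r := by
    have : (Q.a : ZMod Q.r)⁻¹ = ((ZMod.unitOfCoprime Q.a Q.coprime)⁻¹ : (ZMod Q.r)ˣ) := by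
      rw [← ZMod.inv_coe_unit, ZMod.coe_unitOfCoprime]
    rw [Basket.binv, this]
    exact ZMod.val_coe_unit_coprime _
  have hkey := natS_key Q.r (Finset.mem_Icc.mpr ⟨h1, h2⟩) Q.binv
    (Finset.mem_range.mpr hblt) hbcop
  have hcast : (74 * Q.r : ℚ) < (natS Q.r Q.binv : ℚ) := by exact_mod_cast hkey
  rw [Basket.l, reidL_eq_natS _ _ hr, lt_div_iff₀ (by positivity)]
  push_cast at hcast ⊢
  linarith
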